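/- Let g₅(y₁,…,y₇) = y₅·(y₁y₂y₃ + 2y₄y₆ − y₁y₆² − y₂ − y₃y₄²) − y₇². The set of singular points of the hypersurface {g₅ = 0} in ℂ⁷, i.e. points y ∈ ℂ⁷ with g₅(y) = 0 and ∇g₅(y) = 0, is exactly the union of the two sets A = {y : y₅ = 0, y₇ = 0, y₁y₂y₃ + 2y₄y₆ − y₁y₆² − y₂ − y₃y₄² = 0} and B = {y : y₇ = 0, y₁y₂ = y₄², y₁y₃ = 1, y₁y₆ = y₄}. -/

import Mathlib

set_option maxHeartbeats 1000000


open MvPolynomial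

set_option maxHeartbeats 1000000 in
lemma pd2 (i : Fin 7) : pderiv i (2 : MvPolynomial (Fin 7) ℂ) = 0 := by
  have : (2:MvPolynomial (Fin 7) ℂ) = C 2 := (map_ofNat C 2).symm
  rw [this, pderiv_C]

/-- g₅(y₁,…,y₇) = y₅(y₁y₂y₃ + 2y₄y₆ − y₁y₆² − y₂ − y₃y₄²) − y₇²,
with variables y₁,…,y₇ indexed by `Fin 7`. -/
noncomputable def g5Poly : MvPolynomial (Fin 7) ℂ :=
  X 4 * (X 0 * X 1 * X 2 + 2 * X 3 * X 5 - X 0 * X 5 ^ 2 - X 1 - X 2 * X 3 ^ 2)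
    - X 6 ^ 2

/-- The singular locus of the hypersurface {g₅ = 0} ⊂ ℂ⁷ is exactly the union
A ∪ B with A = {y₅ = 0, y₇ = 0, y₁y₂y₃+2y₄y₆−y₁y₆²−y₂−y₃y₄² = 0}
and B = {y₇ = 0, y₁y₂ = y₄², y₁y₃ = 1, y₁y₆ = y₄}. -/
theorem singular_locus_g5 (y : Fin 7 → ℂ) :
    (eval y g5Poly = 0 ∧ ∀ i : Fin 7, eval y (pderiv i g5Poly) = 0) ↔
    ((y 4 = 0 ∧ y 6 = 0 ∧
        y 0 * y 1 * y 2 + 2 * y 3 * y 5 - y 0 * y 5 ^ 2 - y 1 - y 2 * y 3 ^ 2 = 0) ∨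
      (y 6 = 0 ∧ y 0 * y 1 = y 3 ^ 2 ∧ y 0 * y 2 = 1 ∧ y 0 * y 5 = y 3)) := by
  constructor
  · rintro ⟨hg, hd⟩
    have h1 := hd 1; have h2 := hd 2; have h4 := hd 4
    have h5 := hd 5; have h6 := hd 6
    simp [g5Poly, pderiv_X, pd2] at h1 h2 h4 h5 h6
    by_cases hy4 : y 4 = 0
    · exact Or.inl ⟨hy4, h6, by linear_combination h4⟩
    · refine Or.inr ⟨h6, ?_, ?_, ?_⟩
      · rcases h2 with h | h; · exact absurd h hy4
        linear_combination h
      · rcases h1 with h | h; · exact absurd h hy4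
        linear_combination h
      · rcases h5 with h | h; · exact absurd h hy4
        linear_combination -h / 2
  · rintro (⟨h4, h6, hF⟩ | ⟨h6, hb1, hb2, hb3⟩)
    · constructor
      · simp [g5Poly, h4, h6]
      · intro i; fin_cases i <;> simp [g5Poly, pderiv_X, pd2, h4, h6] <;>
          linear_combination hF
    · have h0 : y 0 ≠ 0 := fun h => by simp [h] at hb2
      have e1 : y 1 = y 3 ^ 2 / y 0 := by field_simp; linear_combination hb1
      have e2 : y 2 = 1 / y 0 := by field_simp; linear_combination hb2
      have e5 : y 5 = y 3 / y 0 := by field_simp; linear_combination hb3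
      have hF : y 0 * y 1 * y 2 + 2 * y 3 * y 5 - y 0 * y 5 ^ 2 - y 1 - y 2 * y 3 ^ 2 = 0 := by
        rw [e1, e2, e5]; field_simp; ring
      constructor
      · simp only [g5Poly, map_sub, map_mul, map_add, map_pow, eval_X, map_ofNat]
        rw [h6]; linear_combination y 4 * hF
      · intro i; fin_cases i
        · simp [g5Poly, pderiv_X, pd2]
          right; rw [e1, e2, e5]; field_simp; ring
        · simp [g5Poly, pderiv_X, pd2]
          right; rw [e2]; field_simp; ring
        · simp [g5Poly, pderiv_X, pd2]
          right; linear_combination hb1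
        · simp [g5Poly, pderiv_X, pd2]
          right; rw [e2, e5]; field_simp; ring
        · simp [g5Poly, pderiv_X, pd2]
          linear_combination hF
        · simp [g5Poly, pderiv_X, pd2]
          right; rw [e5]; field_simp; ring
        · simp [g5Poly, pderiv_X, pd2, h6]
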